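/- arXiv:2307.06453 — 3 statements merged into one kernel-verified Lean document; each statement's English description precedes it below -/
import Mathlib

section
/- For any constants ε, C > 0 there is δ > 0 such that the following holds. If (p_n) is a sequence with p_n ≤ C/n, then with high probability G ~ 𝔾(n, p_n) has the property that every vertex subset S with |S| ≤ δn spans at most (1+ε)|S| edges. -/
open MeasureTheory Filter
open scoped ENNReal NNReal

noncomputable def bernoulliM (p : ℝ) : Measure Bool :=
  (Real.toNNReal p) • Measure.dirac true + (Real.toNNReal (1 - p)) • Measure.dirac false

instance (p : ℝ) : IsFiniteMeasure (bernoulliM p) := by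
  unfold bernoulliM; infer_instance

noncomputable def erMeasure (n : ℕ) (p : ℝ) : Measure (Fin n → Fin n → Bool) :=
  Measure.pi fun _ => Measure.pi fun _ => bernoulliM p

lemma measSet_all {n : ℕ} (s : Set (Fin n → Fin n → Bool)) : MeasurableSet s :=
  s.to_countable.measurableSet

lemma bernoulliM_true (p : ℝ) : bernoulliM p {true} = ENNReal.ofReal p := by
  unfold bernoulliM
  rw [Measure.add_apply, Measure.smul_apply, Measure.smul_apply,
    Measure.dirac_apply' _ (by trivial), Measure.dirac_apply' _ (by trivial)]
  simp [ENNReal.smul_def, ENNReal.ofReal]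

lemma bernoulliM_univ (p : ℝ) (hp : p ∈ Set.Icc (0:ℝ) 1) : bernoulliM p Set.univ = 1 := by
  unfold bernoulliM
  rw [Measure.add_apply, Measure.smul_apply, Measure.smul_apply,
    Measure.dirac_apply' _ (by trivial), Measure.dirac_apply' _ (by trivial)]
  simp only [Set.mem_univ, Set.indicator_of_mem, Pi.one_apply, ENNReal.smul_def, mul_one,
    smul_eq_mul]
  rw [show ((p.toNNReal : ℝ≥0∞)) = ENNReal.ofReal p from rfl,
      show (((1-p).toNNReal : ℝ≥0∞)) = ENNReal.ofReal (1-p) from rfl,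
      ← ENNReal.ofReal_add hp.1 (by linarith [hp.2])]
  norm_num

lemma bernoulliM_prob (p : ℝ) (hp : p ∈ Set.Icc (0:ℝ) 1) : IsProbabilityMeasure (bernoulliM p) :=
  ⟨bernoulliM_univ p hp⟩

lemma erMeasure_prob (n : ℕ) (p : ℝ) (hp : p ∈ Set.Icc (0:ℝ) 1) :
    IsProbabilityMeasure (erMeasure n p) := by
  haveI := bernoulliM_prob p hp
  unfold erMeasure; infer_instance

lemma erMeasure_allTrue {n : ℕ} {p : ℝ} (hp : p ∈ Set.Icc (0:ℝ) 1)
    (T : Finset (Fin n × Fin n)) :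
    erMeasure n p {A | ∀ e ∈ T, A e.1 e.2 = true} = ENNReal.ofReal p ^ T.card := by
  classical
  have hset : {A : Fin n → Fin n → Bool | ∀ e ∈ T, A e.1 e.2 = true}
      = Set.pi Set.univ (fun i => Set.pi Set.univ
          (fun j => if (i,j) ∈ T then ({true} : Set Bool) else Set.univ)) := by
    ext A
    simp only [Set.mem_setOf_eq, Set.mem_pi, Set.mem_univ, forall_true_left]
    constructor
    · intro h i j
      split_ifs with hij
      · exact h (i,j) hij
      · trivial
    · intro h e he
      have h2 := h e.1 e.2
      rw [if_pos he] at h2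
      exact h2
  rw [erMeasure, hset, Measure.pi_pi]
  simp only [Measure.pi_pi]
  rw [← Finset.prod_product']
  have : ∀ e : Fin n × Fin n,
      bernoulliM p (if (e.1, e.2) ∈ T then ({true} : Set Bool) else Set.univ)
      = if e ∈ T then ENNReal.ofReal p else 1 := by
    intro e
    split_ifs with h
    · exact bernoulliM_true p
    · exact bernoulliM_univ p hp
  rw [Finset.prod_congr rfl (fun e _ => this e)]
  rw [Finset.prod_ite_mem, Finset.univ_product_univ, Finset.univ_inter, Finset.prod_const]

lemma succ_pow_le_real (n : ℕ) : ((n:ℝ)+1)^n ≤ 3 * (n:ℝ)^n := by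
  rcases Nat.eq_zero_or_pos n with h | h
  · subst h; norm_num
  · have hn : (0:ℝ) < n := by exact_mod_cast h
    have h1 : ((n:ℝ)+1)^n = ((1 + 1/n) * n)^n := by
      congr 1; field_simp
    rw [h1, mul_pow]
    have h2 : (1 + 1/(n:ℝ))^n ≤ Real.exp (1/n) ^ n := by
      apply pow_le_pow_left₀ (by positivity)
      linarith [Real.add_one_le_exp (1/(n:ℝ))]
    have h3 : Real.exp (1/(n:ℝ)) ^ n = Real.exp 1 := by
      rw [← Real.exp_nat_mul]
      congr 1; field_simp
    have h4 : Real.exp 1 ≤ 3 := by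
      have := Real.exp_one_lt_d9; linarith
    calc (1 + 1/(n:ℝ))^n * (n:ℝ)^n ≤ Real.exp 1 * (n:ℝ)^n := by
          rw [← h3]; exact mul_le_mul_of_nonneg_right h2 (by positivity)
      _ ≤ 3 * (n:ℝ)^n := mul_le_mul_of_nonneg_right h4 (by positivity)

lemma succ_pow_le (n : ℕ) : (n+1)^n ≤ 3 * n^n := by
  exact_mod_cast succ_pow_le_real n

lemma pow_self_le_factorial (n : ℕ) : n^n ≤ 3^n * n.factorial := by
  induction n with
  | zero => simp
  | succ m ih =>
    calc (m+1)^(m+1) = (m+1)^m * (m+1) := by ring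
      _ ≤ (3 * m^m) * (m+1) := Nat.mul_le_mul_right _ (succ_pow_le m)
      _ ≤ (3 * (3^m * m.factorial)) * (m+1) := by
          exact Nat.mul_le_mul_right _ (Nat.mul_le_mul_left _ ih)
      _ = 3^(m+1) * (m+1).factorial := by
          rw [Nat.factorial_succ]; ring

lemma choose_mul_pow_le (n s : ℕ) : n.choose s * s^s ≤ 3^s * n^s := by
  calc n.choose s * s^s ≤ n.choose s * (3^s * s.factorial) :=
        Nat.mul_le_mul_left _ (pow_self_le_factorial s)
    _ = 3^s * (s.factorial * n.choose s) := by ring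
    _ = 3^s * n.descFactorial s := by rw [Nat.descFactorial_eq_factorial_mul_choose]
    _ ≤ 3^s * n^s := Nat.mul_le_mul_left _ (Nat.descFactorial_le_pow n s)

lemma choose_sq_le {s k : ℕ} (hs : 1 ≤ s) (h : s ≤ k) : (s*s).choose k ≤ 3^k * s^k := by
  have h1 : (s*s).choose k * s^k ≤ (s*s).choose k * k^k :=
    Nat.mul_le_mul_left _ (Nat.pow_le_pow_left h k)
  have h2 := choose_mul_pow_le (s*s) k
  have h3 : (s*s).choose k * s^k ≤ 3^k * (s*s)^k := h1.trans h2
  have h4 : 3^k * (s*s)^k = (3^k * s^k) * s^k := by rw [mul_pow]; ring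
  rw [h4] at h3
  exact Nat.le_of_mul_le_mul_right h3 (Nat.pow_pos hs)

def pairsF {n : ℕ} (S : Finset (Fin n)) : Finset (Fin n × Fin n) :=
  (S ×ˢ S).filter (fun e => e.1 < e.2)

lemma card_pairsF_le {n : ℕ} (S : Finset (Fin n)) : (pairsF S).card ≤ S.card * S.card := by
  calc (pairsF S).card ≤ (S ×ˢ S).card := Finset.card_filter_le _ _
    _ = S.card * S.card := Finset.card_product S S

def GrAdj {n : ℕ} (A : Fin n → Fin n → Bool) (u v : Fin n) : Prop :=
  u ≠ v ∧ A (min u v) (max u v) = true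

noncomputable def edgesWithin {n : ℕ} (A : Fin n → Fin n → Bool) (S : Set (Fin n)) : ℕ :=
  ({e : Fin n × Fin n | e.1 < e.2 ∧ e.1 ∈ S ∧ e.2 ∈ S ∧ GrAdj A e.1 e.2}).ncard

lemma edgesWithin_coe {n : ℕ} (A : Fin n → Fin n → Bool) (S : Finset (Fin n)) :
    edgesWithin A ↑S = ((pairsF S).filter (fun e => A e.1 e.2 = true)).card := by
  rw [edgesWithin, ← Set.ncard_coe_finset]
  congr 1
  ext e
  simp only [Set.mem_setOf_eq, Finset.coe_filter, pairsF, Finset.mem_filter,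
    Finset.mem_product, Finset.mem_coe]
  constructor
  · rintro ⟨hlt, h1, h2, -, hA⟩
    rw [min_eq_left hlt.le, max_eq_right hlt.le] at hA
    exact ⟨⟨⟨h1, h2⟩, hlt⟩, hA⟩
  · rintro ⟨⟨⟨h1, h2⟩, hlt⟩, hA⟩
    refine ⟨hlt, h1, h2, ne_of_lt hlt, ?_⟩
    rwa [min_eq_left hlt.le, max_eq_right hlt.le]

lemma badF_bound {n : ℕ} {p : ℝ} (hp : p ∈ Set.Icc (0:ℝ) 1) (S : Finset (Fin n)) (k : ℕ) :
    erMeasure n p {A | k ≤ ((pairsF S).filter (fun e => A e.1 e.2 = true)).card}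
      ≤ ((S.card * S.card).choose k : ℝ≥0∞) * ENNReal.ofReal p ^ k := by
  classical
  have hsub : {A : Fin n → Fin n → Bool | k ≤ ((pairsF S).filter (fun e => A e.1 e.2 = true)).card}
      ⊆ ⋃ T ∈ (pairsF S).powersetCard k, {A | ∀ e ∈ T, A e.1 e.2 = true} := by
    intro A hA
    have hA' : k ≤ ((pairsF S).filter (fun e => A e.1 e.2 = true)).card := hA
    obtain ⟨T, hTsub, hTcard⟩ :=
      Finset.exists_subset_card_eq hA'
    refine Set.mem_iUnion₂.2 ⟨T, ?_, ?_⟩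
    · exact Finset.mem_powersetCard.2 ⟨hTsub.trans (Finset.filter_subset _ _), hTcard⟩
    · intro e he
      exact (Finset.mem_filter.1 (hTsub he)).2
  calc erMeasure n p _ ≤ ∑ T ∈ (pairsF S).powersetCard k,
        erMeasure n p {A | ∀ e ∈ T, A e.1 e.2 = true} :=
        le_trans (measure_mono hsub) (measure_biUnion_finset_le _ _)
    _ = ∑ T ∈ (pairsF S).powersetCard k, ENNReal.ofReal p ^ k := by
        apply Finset.sum_congr rfl
        intro T hT
        rw [erMeasure_allTrue hp, (Finset.mem_powersetCard.1 hT).2]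
    _ = ((pairsF S).card.choose k : ℝ≥0∞) * ENNReal.ofReal p ^ k := by
        rw [Finset.sum_const, Finset.card_powersetCard, nsmul_eq_mul]
    _ ≤ ((S.card * S.card).choose k : ℝ≥0∞) * ENNReal.ofReal p ^ k := by
        gcongr
        exact card_pairsF_le S


lemma sum_tail_bound (m : ℕ) : ∑ s ∈ Finset.Icc 1 m, (s:ℝ) * (1/2)^(s-1) ≤ 4 := by
  have hgeom : HasSum (fun s : ℕ => (s:ℝ) * (1/2)^s) 2 := by
    have h := hasSum_coe_mul_geometric_of_norm_lt_one (r := (1/2 : ℝ)) (by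
      rw [Real.norm_eq_abs]; rw [abs_of_pos]; norm_num; norm_num)
    norm_num at h
    convert h using 2
  have hle : ∑ s ∈ Finset.Icc 1 m, (s:ℝ) * (1/2)^s ≤ 2 := by
    exact le_trans (Summable.sum_le_tsum _ (fun i _ => by positivity) hgeom.summable) hgeom.tsum_eq.le
  have heq : ∀ s ∈ Finset.Icc 1 m, (s:ℝ) * (1/2)^(s-1) = 2 * ((s:ℝ) * (1/2)^s) := by
    intro s hs
    obtain ⟨t, rfl⟩ := Nat.exists_eq_add_of_le (Finset.mem_Icc.1 hs).1
    have h1 : 1 + t - 1 = t := by omega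
    rw [h1, pow_add]
    ring
  rw [Finset.sum_congr rfl heq, ← Finset.mul_sum]
  linarith

lemma term_bound (ε C1 : ℝ) (hε0 : 0 < ε) (hε1 : ε ≤ 1) (hC1 : 1 ≤ C1)
    (n s : ℕ) (hn : 1 ≤ n) (hs : 1 ≤ s) (hsn : (s:ℝ) ≤ n) :
    (n.choose s : ℝ) * (((s*s).choose (Nat.floor ((1+ε)*s) + 1)) : ℝ)
      * (C1/n)^(Nat.floor ((1+ε)*s) + 1)
    ≤ ((81 * C1^3) * ((s:ℝ)/n)^ε)^s := by
  set k : ℕ := Nat.floor ((1+ε)*s) + 1 with hk_def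
  have hsk : s + 1 ≤ k := by
    have : s ≤ Nat.floor ((1+ε)*s) := Nat.le_floor (by nlinarith [Nat.cast_nonneg (α := ℝ) s])
    omega
  have hk3 : k ≤ 3*s := by
    have h2 : Nat.floor ((1+ε)*(s:ℝ)) ≤ Nat.floor ((2*s : ℕ) : ℝ) := by
      apply Nat.floor_le_floor
      push_cast
      nlinarith [Nat.cast_nonneg (α := ℝ) s]
    rw [Nat.floor_natCast] at h2
    omega
  set d : ℕ := k - s with hd_def
  have hkd : k = s + d := by omega
  have hεd : ε * s ≤ (d:ℝ) := by
    have h1 : (1+ε)*(s:ℝ) < Nat.floor ((1+ε)*(s:ℝ)) + 1 := Nat.lt_floor_add_one _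
    have h2 : (d:ℝ) = (k:ℝ) - (s:ℝ) := by
      rw [hkd]; push_cast; ring
    have h3 : ((k:ℕ):ℝ) = (Nat.floor ((1+ε)*(s:ℝ)) : ℝ) + 1 := by rw [hk_def]; push_cast; ring
    rw [h2, h3]
    nlinarith
  have hn0 : (0:ℝ) < n := by exact_mod_cast hn
  have hs0 : (0:ℝ) < s := by exact_mod_cast hs
  have hx0 : (0:ℝ) < (s:ℝ)/n := by positivity
  have hx1 : (s:ℝ)/n ≤ 1 := by rw [div_le_one hn0]; exact hsn
  have step1 : (n.choose s : ℝ) ≤ 3^s * (n:ℝ)^s / (s:ℝ)^s := by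
    rw [le_div_iff₀ (by positivity)]
    exact_mod_cast choose_mul_pow_le n s
  have step2 : (((s*s).choose k) : ℝ) ≤ 3^k * (s:ℝ)^k := by
    exact_mod_cast choose_sq_le hs (by omega : s ≤ k)
  calc (n.choose s : ℝ) * (((s*s).choose k) : ℝ) * (C1/n)^k
      ≤ (3^s * (n:ℝ)^s / (s:ℝ)^s) * (3^k * (s:ℝ)^k) * (C1/n)^k := by
        gcongr
    _ = 3^(s+k) * C1^k * ((s:ℝ)/n)^d := by
        rw [hkd]
        have hn' : (n:ℝ) ≠ 0 := hn0.ne'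
        have hs' : (s:ℝ) ≠ 0 := hs0.ne'
        rw [div_pow, div_pow]
        simp only [pow_add]
        field_simp
    _ ≤ 81^s * C1^(3*s) * ((s:ℝ)/n)^d := by
        have h31 : (3:ℝ)^(s+k) ≤ 81^s := by
          calc (3:ℝ)^(s+k) ≤ 3^(4*s) := by
                apply pow_le_pow_right₀ (by norm_num)
                omega
            _ = 81^s := by rw [pow_mul]; norm_num
        have hC1k : C1^k ≤ C1^(3*s) := pow_le_pow_right₀ hC1 hk3
        exact mul_le_mul_of_nonneg_right
          (mul_le_mul h31 hC1k (by positivity) (by positivity)) (by positivity)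
    _ ≤ 81^s * C1^(3*s) * (((s:ℝ)/n)^ε)^s := by
        have hkey : ((s:ℝ)/n)^d ≤ (((s:ℝ)/n)^ε)^s := by
          calc ((s:ℝ)/n)^d = ((s:ℝ)/n) ^ (d:ℝ) := (Real.rpow_natCast _ d).symm
            _ ≤ ((s:ℝ)/n) ^ (ε * s) :=
                Real.rpow_le_rpow_of_exponent_ge hx0 hx1 hεd
            _ = (((s:ℝ)/n)^ε)^s := by
                rw [Real.rpow_mul hx0.le, Real.rpow_natCast]
        exact mul_le_mul_of_nonneg_left hkey (by positivity)
    _ = ((81 * C1^3) * ((s:ℝ)/n)^ε)^s := by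
        rw [mul_pow, mul_pow, pow_mul]

lemma exists_delta (ε C : ℝ) (hε0 : 0 < ε) (hε1 : ε ≤ 1) (hC : 0 < C) :
    ∃ δ : ℝ, 0 < δ ∧ δ ≤ 1 ∧
      Tendsto (fun n : ℕ => ∑ s ∈ Finset.Icc 1 (Nat.floor (δ * n)),
          ((n.choose s : ℝ) * (((s*s).choose (Nat.floor ((1+ε)*s) + 1)) : ℝ)
            * (C/n)^(Nat.floor ((1+ε)*s) + 1)))
        atTop (nhds 0) := by
  set C1 : ℝ := max C 1 with hC1_def
  have hC1 : 1 ≤ C1 := le_max_right _ _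
  have hCC1 : C ≤ C1 := le_max_left _ _
  set K : ℝ := 81 * C1^3 with hK_def
  have hK1 : 1 ≤ K := by
    have h3 : (1:ℝ) ≤ C1^3 := one_le_pow₀ hC1
    nlinarith
  have hK0 : 0 < K := by linarith
  set δ : ℝ := min 1 ((2*K) ^ (-(1/ε))) with hδ_def
  have hδ0 : 0 < δ := by
    apply lt_min one_pos
    apply Real.rpow_pos_of_pos
    linarith
  have hδ1 : δ ≤ 1 := min_le_left _ _
  have hKδ : K * δ ^ ε ≤ 1/2 := by
    have h1 : δ ^ ε ≤ ((2*K) ^ (-(1/ε))) ^ ε :=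
      Real.rpow_le_rpow hδ0.le (min_le_right _ _) hε0.le
    have h2 : ((2*K) ^ (-(1/ε))) ^ ε = (2*K)⁻¹ := by
      rw [← Real.rpow_mul (by linarith : (0:ℝ) ≤ 2*K)]
      rw [show (-(1/ε))*ε = -1 by field_simp]
      exact Real.rpow_neg_one _
    calc K * δ ^ ε ≤ K * (2*K)⁻¹ := by
          rw [← h2]; exact mul_le_mul_of_nonneg_left h1 hK0.le
      _ = 1/2 := by field_simp
  refine ⟨δ, hδ0, hδ1, ?_⟩
  have key : ∀ n : ℕ, 1 ≤ n →
      ∑ s ∈ Finset.Icc 1 (Nat.floor (δ * n)),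
          ((n.choose s : ℝ) * (((s*s).choose (Nat.floor ((1+ε)*s) + 1)) : ℝ)
            * (C/n)^(Nat.floor ((1+ε)*s) + 1))
        ≤ (4*K) * (n:ℝ) ^ (-ε) := by
    intro n hn
    have hn0 : (0:ℝ) < n := by exact_mod_cast hn
    have hstep : ∀ s ∈ Finset.Icc 1 (Nat.floor (δ * n)),
        ((n.choose s : ℝ) * (((s*s).choose (Nat.floor ((1+ε)*s) + 1)) : ℝ)
            * (C/n)^(Nat.floor ((1+ε)*s) + 1))
        ≤ (K * (s:ℝ) * (1/2)^(s-1)) * (n:ℝ)^(-ε) := by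
      intro s hsmem
      obtain ⟨hs1, hs2⟩ := Finset.mem_Icc.1 hsmem
      have hsδ : (s:ℝ) ≤ δ * n := by
        have := (Nat.le_floor_iff (by positivity : (0:ℝ) ≤ δ * n)).1 hs2
        exact_mod_cast this
      have hsn : (s:ℝ) ≤ n := le_trans hsδ (by nlinarith)
      have hs0 : (0:ℝ) < s := by exact_mod_cast hs1
      have t1 : ((n.choose s : ℝ) * (((s*s).choose (Nat.floor ((1+ε)*s) + 1)) : ℝ)
            * (C/n)^(Nat.floor ((1+ε)*s) + 1))
          ≤ ((n.choose s : ℝ) * (((s*s).choose (Nat.floor ((1+ε)*s) + 1)) : ℝ)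
            * (C1/n)^(Nat.floor ((1+ε)*s) + 1)) := by
        have hck : (0:ℝ) ≤ (n.choose s : ℝ) * (((s*s).choose (Nat.floor ((1+ε)*s) + 1)) : ℝ) := by
          positivity
        apply mul_le_mul_of_nonneg_left _ hck
        apply pow_le_pow_left₀ (div_nonneg hC.le hn0.le)
        exact div_le_div_of_nonneg_right hCC1 hn0.le
      have t2 := term_bound ε C1 hε0 hε1 hC1 n s hn hs1 hsn
      set x : ℝ := K * ((s:ℝ)/n)^ε with hx_def
      have hx0 : 0 ≤ x := by positivity
      have hxhalf : x ≤ 1/2 := by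
        have hδε : ((s:ℝ)/n)^ε ≤ δ^ε := by
          apply Real.rpow_le_rpow (by positivity) _ hε0.le
          rw [div_le_iff₀ hn0]
          exact hsδ
        calc x ≤ K * δ^ε := mul_le_mul_of_nonneg_left hδε hK0.le
          _ ≤ 1/2 := hKδ
      have hpow : x^s ≤ x * (1/2)^(s-1) := by
        have hss : s - 1 + 1 = s := by omega
        calc x^s = x^(s-1) * x := by rw [← pow_succ, hss]
          _ ≤ (1/2)^(s-1) * x := by
              exact mul_le_mul_of_nonneg_right (pow_le_pow_left₀ hx0 hxhalf _) hx0
          _ = x * (1/2)^(s-1) := by ring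
      have hxle : x ≤ K * (s:ℝ) * ((n:ℝ)^ε)⁻¹ := by
        have e1 : ((s:ℝ)/n)^ε = (s:ℝ)^ε * ((n:ℝ)^ε)⁻¹ := by
          rw [Real.div_rpow hs0.le hn0.le, div_eq_mul_inv]
        have e2 : (s:ℝ)^ε ≤ s := by
          calc (s:ℝ)^ε ≤ (s:ℝ)^(1:ℝ) :=
                Real.rpow_le_rpow_of_exponent_le (by exact_mod_cast hs1) hε1
            _ = s := Real.rpow_one _
        have e3 : 0 ≤ ((n:ℝ)^ε)⁻¹ := by positivity
        rw [hx_def, e1, ← mul_assoc]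
        exact mul_le_mul_of_nonneg_right (mul_le_mul_of_nonneg_left e2 hK0.le) e3
      have hnneg : ((n:ℝ))^(-ε) = ((n:ℝ)^ε)⁻¹ := Real.rpow_neg hn0.le ε
      calc ((n.choose s : ℝ) * (((s*s).choose (Nat.floor ((1+ε)*s) + 1)) : ℝ)
            * (C/n)^(Nat.floor ((1+ε)*s) + 1))
          ≤ x^s := t1.trans t2
        _ ≤ x * (1/2)^(s-1) := hpow
        _ ≤ (K * (s:ℝ) * ((n:ℝ)^ε)⁻¹) * (1/2)^(s-1) :=
            mul_le_mul_of_nonneg_right hxle (by positivity)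
        _ = (K * (s:ℝ) * (1/2)^(s-1)) * ((n:ℝ)^ε)⁻¹ := by ring
        _ = (K * (s:ℝ) * (1/2)^(s-1)) * ((n:ℝ))^(-ε) := by rw [hnneg]
    calc ∑ s ∈ Finset.Icc 1 (Nat.floor (δ * n)),
          ((n.choose s : ℝ) * (((s*s).choose (Nat.floor ((1+ε)*s) + 1)) : ℝ)
            * (C/n)^(Nat.floor ((1+ε)*s) + 1))
        ≤ ∑ s ∈ Finset.Icc 1 (Nat.floor (δ * n)),
            (K * (s:ℝ) * (1/2)^(s-1)) * ((n:ℝ))^(-ε) := Finset.sum_le_sum hstep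
      _ = (K * ∑ s ∈ Finset.Icc 1 (Nat.floor (δ * n)), (s:ℝ) * (1/2)^(s-1)) * ((n:ℝ))^(-ε) := by
          rw [← Finset.sum_mul, Finset.mul_sum]
          congr 1
          apply Finset.sum_congr rfl
          intro s _
          ring
      _ ≤ (K * 4) * ((n:ℝ))^(-ε) := by
          have h4 := sum_tail_bound (Nat.floor (δ * n))
          have hrp : (0:ℝ) ≤ ((n:ℝ))^(-ε) := Real.rpow_nonneg hn0.le _
          apply mul_le_mul_of_nonneg_right _ hrp
          exact mul_le_mul_of_nonneg_left h4 hK0.le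
      _ = (4*K) * ((n:ℝ))^(-ε) := by ring
  have h0 : Tendsto (fun n : ℕ => (4*K) * (n:ℝ)^(-ε)) atTop (nhds 0) := by
    have h1 : Tendsto (fun n : ℕ => ((n:ℝ))^(-ε)) atTop (nhds 0) :=
      (tendsto_rpow_neg_atTop hε0).comp tendsto_natCast_atTop_atTop
    have h2 := h1.const_mul (4*K)
    simpa using h2
  apply tendsto_of_tendsto_of_tendsto_of_le_of_le' tendsto_const_nhds h0
  · filter_upwards with n
    apply Finset.sum_nonneg
    intro s _
    positivity
  · filter_upwards [eventually_ge_atTop 1] with n hn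
    exact key n hn

lemma main_aux (ε C : ℝ) (hε0 : 0 < ε) (hε1 : ε ≤ 1) (hC : 0 < C) :
    ∃ δ : ℝ, 0 < δ ∧
      ∀ p : ℕ → ℝ, (∀ n, p n ∈ Set.Icc (0 : ℝ) 1) → (∀ n : ℕ, p n ≤ C / n) →
      Tendsto (fun n => erMeasure n (p n)
          {A | ∀ S : Set (Fin n), (S.ncard : ℝ) ≤ δ * n →
            ((edgesWithin A S : ℝ)) ≤ (1 + ε) * S.ncard})
        atTop (nhds 1) := by
  classical
  obtain ⟨δ, hδ0, hδ1, htend⟩ := exists_delta ε C hε0 hε1 hC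
  refine ⟨δ, hδ0, ?_⟩
  intro p hp hpC
  set good : ∀ n : ℕ, Set (Fin n → Fin n → Bool) := fun n =>
    {A | ∀ S : Set (Fin n), (S.ncard : ℝ) ≤ δ * n →
      ((edgesWithin A S : ℝ)) ≤ (1 + ε) * S.ncard} with hgood_def
  have hbad_incl : ∀ n : ℕ, (good n)ᶜ ⊆
      ⋃ s ∈ Finset.Icc 1 (Nat.floor (δ * n)), ⋃ S ∈ Finset.powersetCard s (Finset.univ : Finset (Fin n)),
        {A | Nat.floor ((1+ε)*s) + 1 ≤ ((pairsF S).filter (fun e => A e.1 e.2 = true)).card} := by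
    intro n A hA
    simp only [Set.mem_compl_iff, hgood_def, Set.mem_setOf_eq, not_forall] at hA
    obtain ⟨Sset, hcard, hedges⟩ := hA
    push_neg at hedges
    set F : Finset (Fin n) := Sset.toFinset with hF_def
    have hcoe : (↑F : Set (Fin n)) = Sset := Set.coe_toFinset _
    have hFcard : Sset.ncard = F.card := Set.ncard_eq_toFinset_card' _
    have hedgesF : edgesWithin A Sset = ((pairsF F).filter (fun e => A e.1 e.2 = true)).card := by
      rw [← hcoe, edgesWithin_coe]
    have hF1 : 1 ≤ F.card := by
      by_contra h
      have h0 : F.card = 0 := by omega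
      have hS0 : Sset.ncard = 0 := by rw [hFcard, h0]
      have hE0 : edgesWithin A Sset = 0 := by
        rw [hedgesF]
        have : F = ∅ := Finset.card_eq_zero.1 h0
        simp [this, pairsF]
      rw [hS0, hE0] at hedges
      norm_num at hedges
    have hFm : F.card ≤ Nat.floor (δ * n) := by
      apply Nat.le_floor
      rw [← hFcard] at *
      exact_mod_cast hcard
    have hk : Nat.floor ((1+ε)*(F.card:ℝ)) + 1 ≤ ((pairsF F).filter (fun e => A e.1 e.2 = true)).card := by
      have h1 : (1+ε)*(F.card:ℝ) < ((pairsF F).filter (fun e => A e.1 e.2 = true)).card := by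
        rw [← hedgesF, ← hFcard]
        exact_mod_cast hedges
      have h2 : Nat.floor ((1+ε)*(F.card:ℝ)) < ((pairsF F).filter (fun e => A e.1 e.2 = true)).card := by
        rw [Nat.floor_lt (by positivity)]
        exact_mod_cast h1
      omega
    refine Set.mem_iUnion₂.2 ⟨F.card, Finset.mem_Icc.2 ⟨hF1, hFm⟩, ?_⟩
    refine Set.mem_iUnion₂.2 ⟨F, Finset.mem_powersetCard.2 ⟨Finset.subset_univ _, rfl⟩, ?_⟩
    exact hk
  have hbad_bound : ∀ n : ℕ, erMeasure n (p n) ((good n)ᶜ) ≤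
      ENNReal.ofReal (∑ s ∈ Finset.Icc 1 (Nat.floor (δ * n)),
          ((n.choose s : ℝ) * (((s*s).choose (Nat.floor ((1+ε)*s) + 1)) : ℝ)
            * (C/n)^(Nat.floor ((1+ε)*s) + 1))) := by
    intro n
    have hCn : (0:ℝ) ≤ C/n := by positivity
    calc erMeasure n (p n) ((good n)ᶜ)
        ≤ ∑ s ∈ Finset.Icc 1 (Nat.floor (δ * n)), erMeasure n (p n)
            (⋃ S ∈ Finset.powersetCard s (Finset.univ : Finset (Fin n)),
              {A | Nat.floor ((1+ε)*s) + 1 ≤ ((pairsF S).filter (fun e => A e.1 e.2 = true)).card}) :=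
          le_trans (measure_mono (hbad_incl n)) (measure_biUnion_finset_le _ _)
      _ ≤ ∑ s ∈ Finset.Icc 1 (Nat.floor (δ * n)),
            ∑ S ∈ Finset.powersetCard s (Finset.univ : Finset (Fin n)),
              erMeasure n (p n)
                {A | Nat.floor ((1+ε)*s) + 1 ≤ ((pairsF S).filter (fun e => A e.1 e.2 = true)).card} :=
          Finset.sum_le_sum (fun s _ => measure_biUnion_finset_le _ _)
      _ ≤ ∑ s ∈ Finset.Icc 1 (Nat.floor (δ * n)),
            ∑ S ∈ Finset.powersetCard s (Finset.univ : Finset (Fin n)),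
              ((s*s).choose (Nat.floor ((1+ε)*s) + 1) : ℝ≥0∞)
                * ENNReal.ofReal (p n) ^ (Nat.floor ((1+ε)*s) + 1) := by
          apply Finset.sum_le_sum
          intro s _
          apply Finset.sum_le_sum
          intro S hS
          have hScard : S.card = s := (Finset.mem_powersetCard.1 hS).2
          have := badF_bound (hp n) S (Nat.floor ((1+ε)*s) + 1)
          rwa [hScard] at this
      _ = ∑ s ∈ Finset.Icc 1 (Nat.floor (δ * n)),
            (n.choose s : ℝ≥0∞) * (((s*s).choose (Nat.floor ((1+ε)*s) + 1)) : ℝ≥0∞)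
              * ENNReal.ofReal (p n) ^ (Nat.floor ((1+ε)*s) + 1) := by
          apply Finset.sum_congr rfl
          intro s _
          rw [Finset.sum_const, Finset.card_powersetCard, Finset.card_univ, Fintype.card_fin,
            nsmul_eq_mul, mul_assoc]
      _ ≤ ∑ s ∈ Finset.Icc 1 (Nat.floor (δ * n)),
            (n.choose s : ℝ≥0∞) * (((s*s).choose (Nat.floor ((1+ε)*s) + 1)) : ℝ≥0∞)
              * ENNReal.ofReal (C/n) ^ (Nat.floor ((1+ε)*s) + 1) := by
          apply Finset.sum_le_sum
          intro s _
          gcongr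
          exact hpC n
      _ = ENNReal.ofReal (∑ s ∈ Finset.Icc 1 (Nat.floor (δ * n)),
            ((n.choose s : ℝ) * (((s*s).choose (Nat.floor ((1+ε)*s) + 1)) : ℝ)
              * (C/n)^(Nat.floor ((1+ε)*s) + 1))) := by
          rw [ENNReal.ofReal_sum_of_nonneg (fun s _ => by positivity)]
          apply Finset.sum_congr rfl
          intro s _
          rw [ENNReal.ofReal_mul (by positivity), ENNReal.ofReal_mul (by positivity),
            ENNReal.ofReal_pow hCn, ENNReal.ofReal_natCast, ENNReal.ofReal_natCast]
  have hbad_tend : Tendsto (fun n => erMeasure n (p n) ((good n)ᶜ)) atTop (nhds 0) := by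
    refine tendsto_of_tendsto_of_tendsto_of_le_of_le tendsto_const_nhds ?_
      (fun n => zero_le) hbad_bound
    have := ENNReal.tendsto_ofReal (f := atTop) htend
    simpa using this
  have hgood_eq : ∀ n : ℕ, erMeasure n (p n) (good n)
      = 1 - erMeasure n (p n) ((good n)ᶜ) := by
    intro n
    haveI := erMeasure_prob n (p n) (hp n)
    rw [← prob_compl_eq_one_sub (measSet_all _), compl_compl]
  have hsub : Tendsto (fun x : ℝ≥0∞ => 1 - x) (nhds 0) (nhds 1) := by
    have := (ENNReal.continuous_sub_left (a := 1) ENNReal.one_ne_top).tendsto 0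
    simpa using this
  have := hsub.comp hbad_tend
  simp only [Function.comp_def] at this
  convert this using 2
  exact hgood_eq _

/-- For any `ε, C > 0` there is `δ > 0` such that for any sequence `pₙ ≤ C/n`, whp every
vertex set `S` of `𝔾(n,pₙ)` with `|S| ≤ δ·n` spans at most `(1+ε)·|S|` edges. -/
theorem whp_small_sets_sparse (ε C : ℝ) (hε : 0 < ε) (hC : 0 < C) :
    ∃ δ : ℝ, 0 < δ ∧
      ∀ p : ℕ → ℝ, (∀ n, p n ∈ Set.Icc (0 : ℝ) 1) → (∀ n : ℕ, p n ≤ C / n) →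
      Tendsto (fun n => erMeasure n (p n)
          {A | ∀ S : Set (Fin n), (S.ncard : ℝ) ≤ δ * n →
            ((edgesWithin A S : ℝ)) ≤ (1 + ε) * S.ncard})
        atTop (nhds 1) := by
  obtain ⟨δ, hδ0, h⟩ := main_aux (min ε 1) C (lt_min hε one_pos) (min_le_right _ _) hC
  refine ⟨δ, hδ0, ?_⟩
  intro p hp hpC
  have h1 := h p hp hpC
  apply tendsto_of_tendsto_of_tendsto_of_le_of_le h1 tendsto_const_nhds
  · intro n
    apply measure_mono
    intro A hA S hS
    have h2 := hA S hS
    have h3 : (1 + min ε 1) * (S.ncard : ℝ) ≤ (1+ε) * S.ncard := by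
      apply mul_le_mul_of_nonneg_right _ (Nat.cast_nonneg _)
      linarith [min_le_left ε 1]
    linarith
  · intro n
    haveI := erMeasure_prob n (p n) (hp n)
    exact prob_le_one
end

section
/- Let D be a finite digraph with a distinguished vertex subset U, and assign to each v ∈ U a list L(v) ⊆ {1,2,3} of size exactly 2. Suppose that for each of the three possible two-element subsets L of {1,2,3}, there is no directed cycle of D all of whose vertices lie in {v ∈ U : L(v) = L}. Then for any colouring c : V(D) \ U → {1,2,3} of the vertices without lists, the colouring can be completed by assigning a colour c(v) ∈ L(v) to each v ∈ U in such a way that every v ∈ U is majority-coloured with respect to the completed colouring (no guarantee is made about vertices outside U). -/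
/-- There is no directed cycle of the digraph `Adj` all of whose vertices lie in `T`:
there is no injective cyclic sequence of vertices of `T`, each of which has an arc to
the next (cyclically). -/
def NoDirectedCycleIn {V : Type*} (Adj : V → V → Prop) (T : Set V) : Prop :=
  ¬ ∃ (m : ℕ) (f : Fin (m + 1) → V), Function.Injective f ∧ (∀ i, f i ∈ T) ∧
      ∀ i : Fin (m + 1), Adj (f i) (f (i + 1))

/-- A vertex `v` is majority-coloured w.r.t. `c`: at most half of its out-neighbours
share its colour. -/
def MajorityAt {V : Type*} (Adj : V → V → Prop) (c : V → Fin 3) (v : V) : Prop :=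
  2 * ({w | Adj v w ∧ c w = c v} : Set V).ncard ≤ ({w | Adj v w} : Set V).ncard

/-- Monotonicity of the no-cycle condition. -/
lemma noDirectedCycleIn_mono {V : Type*} {Adj : V → V → Prop} {T T' : Set V}
    (hsub : T' ⊆ T) (h : NoDirectedCycleIn Adj T) : NoDirectedCycleIn Adj T' := by
  rintro ⟨m, f, hinj, hmem, hadj⟩
  exact h ⟨m, f, hinj, fun i => hsub (hmem i), hadj⟩

/-- A digraph with no directed cycle inside `T` has no closed walk inside `T`. -/
lemma no_closed_walk {V : Type*} {Adj : V → V → Prop} {T : Set V}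
    (h : NoDirectedCycleIn Adj T) :
    ∀ n : ℕ, 1 ≤ n → ∀ g : ℕ → V, (∀ i ≤ n, g i ∈ T) →
      (∀ i < n, Adj (g i) (g (i + 1))) → g n = g 0 → False := by
  intro n
  induction n using Nat.strong_induction_on with
  | _ n IH =>
    intro hn g hmem hadj hclosed
    by_cases hinj : ∀ i j, i < n → j < n → g i = g j → i = j
    · apply h
      obtain ⟨m, rfl⟩ : ∃ m, n = m + 1 := ⟨n - 1, by omega⟩
      refine ⟨m, fun i => g i.val, ?_, fun i => hmem i.val i.isLt.le, ?_⟩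
      · intro i j hij
        exact Fin.ext (hinj i.val j.val i.isLt j.isLt hij)
      · intro i
        have hval : ((i + 1 : Fin (m + 1)) : ℕ) = ((i : ℕ) + 1) % (m + 1) := by
          rw [Fin.val_add, Fin.val_one', Nat.add_mod_mod]
        by_cases hi : (i : ℕ) < m
        · have h1 : ((i + 1 : Fin (m + 1)) : ℕ) = (i : ℕ) + 1 := by
            rw [hval, Nat.mod_eq_of_lt (by omega)]
          show Adj (g i.val) (g ((i + 1 : Fin (m + 1)) : ℕ))
          rw [h1]
          exact hadj i.val i.isLt
        · have hiv : (i : ℕ) = m := by have := i.isLt; omega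
          have h1 : ((i + 1 : Fin (m + 1)) : ℕ) = 0 := by
            rw [hval, hiv, Nat.mod_self]
          show Adj (g i.val) (g ((i + 1 : Fin (m + 1)) : ℕ))
          rw [h1, hiv, ← hclosed]
          exact hadj m (by omega)
    · push_neg at hinj
      obtain ⟨i, j, hi, hj, hgij, hne⟩ := hinj
      have key : ∀ i j : ℕ, i < n → j < n → i < j → g i = g j → False := by
        intro i j hi hj hlt hgij
        refine IH (j - i) (by omega) (by omega) (fun k => g (i + k))
          (fun k hk => hmem (i + k) (by omega)) (fun k hk => ?_) ?_
        · show Adj (g (i + k)) (g (i + (k + 1)))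
          have h1 : i + (k + 1) = (i + k) + 1 := by omega
          rw [h1]
          exact hadj (i + k) (by omega)
        · show g (i + (j - i)) = g (i + 0)
          have h1 : i + (j - i) = j := by omega
          have h2 : i + 0 = i := by omega
          rw [h1, h2, hgij]
      rcases hne.lt_or_gt with hlt | hlt
      · exact key i j hi hj hlt hgij
      · exact key j i hj hi hlt hgij.symm

/-- If every vertex of a nonempty set `T` (in a finite type) has an out-neighbour in `T`,
then there is a directed cycle in `T`. -/
lemma exists_cycle_of_no_sink {V : Type*} [Fintype V] {Adj : V → V → Prop} {T : Set V}
    (h : NoDirectedCycleIn Adj T) (hall : ∀ v ∈ T, ∃ w ∈ T, Adj v w) {v₀ : V}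
    (hv₀ : v₀ ∈ T) : False := by
  classical
  let F : {v : V // v ∈ T} → {v : V // v ∈ T} :=
    fun v => ⟨(hall v.1 v.2).choose, (hall v.1 v.2).choose_spec.1⟩
  have hF : ∀ v, Adj v.1 (F v).1 := fun v => (hall v.1 v.2).choose_spec.2
  let g : ℕ → {v : V // v ∈ T} := fun n => F^[n] ⟨v₀, hv₀⟩
  have hg : ∀ n, g (n + 1) = F (g n) := fun n => Function.iterate_succ_apply' F n _
  have key : ∀ i j : ℕ, i < j → g i = g j → False := by
    intro i j hlt hij
    refine no_closed_walk h (j - i) (by omega) (fun k => (g (i + k)).1)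
      (fun k _ => (g (i + k)).2) (fun k _ => ?_) ?_
    · show Adj (g (i + k)).1 (g (i + (k + 1))).1
      have h1 : i + (k + 1) = (i + k) + 1 := by omega
      rw [h1, hg (i + k)]
      exact hF _
    · show (g (i + (j - i))).1 = (g (i + 0)).1
      rw [show i + (j - i) = j by omega, show i + 0 = i by omega, hij]
  obtain ⟨i, j, hne, hij⟩ := Finite.exists_ne_map_eq_of_infinite g
  rcases hne.lt_or_gt with hlt | hlt
  · exact key i j hlt hij
  · exact key j i hlt hij.symm

/-- Main induction for the majority list colouring theorem, with fuel `n` bounding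
the cardinality of `U`. -/
lemma majority_aux {V : Type*} [Fintype V] (Adj : V → V → Prop) (hirr : ∀ v, ¬ Adj v v)
    (L : V → Finset (Fin 3)) :
    ∀ (n : ℕ) (U : Set V), U.ncard ≤ n → (∀ v ∈ U, (L v).card = 2) →
      (∀ l : Finset (Fin 3), NoDirectedCycleIn Adj {v | v ∈ U ∧ L v = l}) →
      ∀ c : V → Fin 3,
      ∃ c' : V → Fin 3, (∀ v ∉ U, c' v = c v) ∧ (∀ v ∈ U, c' v ∈ L v) ∧
        ∀ v ∈ U, MajorityAt Adj c' v := by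
  intro n
  induction n with
  | zero =>
    intro U hcard hL hcyc c
    have hU : U = ∅ := by
      rw [← Set.ncard_eq_zero (Set.toFinite U)]
      omega
    subst hU
    exact ⟨c, fun v _ => rfl, by simp, by simp⟩
  | succ n IH =>
    intro U hcard hL hcyc c
    classical
    rcases Set.eq_empty_or_nonempty U with rfl | ⟨v₀, hv₀⟩
    · exact ⟨c, fun v _ => rfl, by simp, by simp⟩
    -- find a vertex with no same-list out-neighbour inside U
    have hsink : ∃ v ∈ U, ∀ w ∈ U, L w = L v → ¬ Adj v w := by
      by_contra hcon
      push_neg at hcon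
      refine exists_cycle_of_no_sink (hcyc (L v₀)) ?_
        (show v₀ ∈ {v | v ∈ U ∧ L v = L v₀} from ⟨hv₀, rfl⟩)
      rintro v ⟨hvU, hvl⟩
      obtain ⟨w, hwU, hwl, hadj⟩ := hcon v hvU
      exact ⟨w, ⟨hwU, hwl.trans hvl⟩, hadj⟩
    obtain ⟨v, hvU, hsink⟩ := hsink
    obtain ⟨a, b, hab, hLv⟩ := Finset.card_eq_two.mp (hL v hvU)
    set Bad : Fin 3 → Set V :=
      fun x => {w | Adj v w ∧ ((w ∉ U ∧ c w = x) ∨ (w ∈ U ∧ x ∈ L w))} with hBad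
    have hdisj : Disjoint (Bad a) (Bad b) := by
      rw [Set.disjoint_left]
      rintro w ⟨hadj, hwa⟩ ⟨_, hwb⟩
      rcases hwa with ⟨hnU, hca⟩ | ⟨hwU, hla⟩
      · rcases hwb with ⟨_, hcb⟩ | ⟨hwU, _⟩
        · exact hab (hca ▸ hcb)
        · exact hnU hwU
      · rcases hwb with ⟨hnU, _⟩ | ⟨_, hlb⟩
        · exact hnU hwU
        · have hsub : L v ⊆ L w := by
            rw [hLv]
            exact Finset.insert_subset hla (Finset.singleton_subset_iff.mpr hlb)
          have heq : L w = L v :=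
            (Finset.eq_of_subset_of_card_le hsub
              (by rw [hL w hwU, hL v hvU])).symm
          exact hsink w hwU heq hadj
    have hsum : (Bad a).ncard + (Bad b).ncard ≤ ({w | Adj v w} : Set V).ncard := by
      rw [← Set.ncard_union_eq hdisj (Set.toFinite _) (Set.toFinite _)]
      refine Set.ncard_le_ncard ?_ (Set.toFinite _)
      intro w hw
      simp only [Set.mem_union, hBad, Set.mem_setOf_eq] at hw
      rcases hw with h1 | h1 <;> exact h1.1
    obtain ⟨x, hxmem, hx2⟩ :
        ∃ x ∈ L v, 2 * (Bad x).ncard ≤ ({w | Adj v w} : Set V).ncard := by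
      rcases le_total ((Bad a).ncard) ((Bad b).ncard) with hle | hle
      · exact ⟨a, by simp [hLv], by omega⟩
      · exact ⟨b, by simp [hLv], by omega⟩
    set c'' : V → Fin 3 := fun w => if w = v then x else c w with hc''
    have hUv : (U \ {v}).ncard ≤ n := by
      have h1 : (U \ {v}).ncard < U.ncard :=
        Set.ncard_diff_singleton_lt_of_mem hvU (Set.toFinite U)
      omega
    obtain ⟨c', hc'out, hc'mem, hc'maj⟩ := IH (U \ {v}) hUv (fun w hw => hL w hw.1)
      (fun l => noDirectedCycleIn_mono (fun u hu => by
        simp only [Set.mem_setOf_eq, Set.mem_diff] at hu ⊢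
        exact ⟨hu.1.1, hu.2⟩) (hcyc l)) c''
    have hc'v : c' v = x := by
      have h1 : c' v = c'' v := hc'out v (by simp)
      rw [h1, hc'']
      simp
    refine ⟨c', ?_, ?_, ?_⟩
    · intro w hw
      have h1 : c' w = c'' w := hc'out w (fun h => hw h.1)
      have h2 : w ≠ v := fun h => hw (h ▸ hvU)
      rw [h1, hc'']
      simp [h2]
    · intro w hw
      by_cases hwv : w = v
      · subst hwv
        rw [hc'v]
        exact hxmem
      · exact hc'mem w ⟨hw, hwv⟩
    · intro w hw
      by_cases hwv : w = v
      · subst hwv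
        unfold MajorityAt
        have hsub2 : {u | Adj w u ∧ c' u = c' w} ⊆ Bad x := by
          rintro u ⟨hadj, hcu⟩
          have huw : u ≠ w := fun h => hirr w (h ▸ hadj)
          rw [hc'v] at hcu
          by_cases huU : u ∈ U
          · exact ⟨hadj, Or.inr ⟨huU, hcu ▸ hc'mem u ⟨huU, huw⟩⟩⟩
          · refine ⟨hadj, Or.inl ⟨huU, ?_⟩⟩
            have h1 : c' u = c'' u := hc'out u (fun h => huU h.1)
            rw [h1, hc''] at hcu
            simpa [huw] using hcu
        calc 2 * ({u | Adj w u ∧ c' u = c' w} : Set V).ncard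
            ≤ 2 * (Bad x).ncard :=
              Nat.mul_le_mul_left 2 (Set.ncard_le_ncard hsub2 (Set.toFinite _))
          _ ≤ _ := hx2
      · exact hc'maj w ⟨hw, hwv⟩

/-- Let `D` be a finite digraph with a distinguished vertex set `U`, assign to each
`v ∈ U` a list `L v ⊆ {1,2,3}` of size 2, and suppose that for each possible list there
is no directed cycle among the vertices of `U` with that list. Then any colouring of the
vertices outside `U` can be completed, choosing colours from the lists on `U`, so that
every vertex of `U` is majority-coloured. -/
theorem majority_list_colouring_of_acyclic_lists
    {V : Type*} [Fintype V] (Adj : V → V → Prop) (hirr : ∀ v, ¬ Adj v v)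
    (U : Set V) (L : V → Finset (Fin 3)) (hL : ∀ v ∈ U, (L v).card = 2)
    (hcyc : ∀ l : Finset (Fin 3), NoDirectedCycleIn Adj {v | v ∈ U ∧ L v = l})
    (c : V → Fin 3) :
    ∃ c' : V → Fin 3, (∀ v ∉ U, c' v = c v) ∧ (∀ v ∈ U, c' v ∈ L v) ∧
      ∀ v ∈ U, MajorityAt Adj c' v :=
  majority_aux Adj hirr L U.ncard U le_rfl hL hcyc c
end

section
/- Define f : (0,1) → ℝ by f(α) = α·(log(arctan(√(α/(1−α)))) − log α) + (1−α)·(log(arctan(√((1−α)/α))) − log(1−α)) + log(2/π). Then f(α) ≤ 0 for all α ∈ (0,1), and f(α) = 0 if and only if α = 1/2. -/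
open Real Set

/-- The exponential-rate function appearing in the second-moment computation. -/
noncomputable def overlapRate (α : ℝ) : ℝ :=
  α * (Real.log (Real.arctan (Real.sqrt (α / (1 - α)))) - Real.log α) +
    (1 - α) * (Real.log (Real.arctan (Real.sqrt ((1 - α) / α))) - Real.log (1 - α)) +
    Real.log (2 / Real.pi)

/-- chord inequality for cos on (0, π/2) -/
lemma cos_chord {v : ℝ} (h0 : 0 < v) (h : v < π / 2) : 1 - 2 * v / π < Real.cos v := by
  have hπ : (0:ℝ) < π := Real.pi_pos
  have h1 : (0:ℝ) ∈ Icc (-(π/2)) (π/2) := by constructor <;> nlinarith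
  have h2 : (π/2) ∈ Icc (-(π/2)) (π/2) := by constructor <;> nlinarith
  have hne : (0:ℝ) ≠ π/2 := by positivity
  have ha : (0:ℝ) < 1 - 2 * v / π := by
    rw [sub_pos, div_lt_one hπ]; linarith
  have hb : (0:ℝ) < 2 * v / π := by positivity
  have hab : (1 - 2 * v / π) + 2 * v / π = 1 := by ring
  have := strictConcaveOn_cos_Icc.2 h1 h2 hne ha hb hab
  simp only [smul_eq_mul, mul_zero, zero_add, Real.cos_zero, Real.cos_pi_div_two,
    mul_one] at this
  have hv : 2 * v / π * (π / 2) = v := by field_simp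
  rw [hv] at this
  linarith

lemma fixed_point {x : ℝ} (hx0 : 0 < x) (hx : x < π / 2)
    (heq : x = π / 2 * Real.sin x ^ 2) : x = π / 4 := by
  have hπ : (0:ℝ) < π := Real.pi_pos
  have hcos : Real.cos (2 * x) = 1 - 4 * x / π := by
    have h2 : Real.cos (2 * x) = 1 - 2 * Real.sin x ^ 2 := by
      rw [Real.cos_two_mul, ← Real.sin_sq_add_cos_sq x]; ring
    have : Real.sin x ^ 2 = 2 * x / π := by
      field_simp at heq ⊢; linarith
    rw [h2, this]; field_simp; ring
  rcases lt_trichotomy x (π/4) with h | h | h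
  · exfalso
    have hc := cos_chord (v := 2*x) (by linarith) (by linarith)
    rw [hcos] at hc
    have he : 2 * (2*x) / π = 4 * x / π := by ring
    linarith
  · exact h
  · exfalso
    have hv0 : 0 < π - 2*x := by linarith
    have hv1 : π - 2*x < π/2 := by linarith
    have hc := cos_chord hv0 hv1
    have hps : Real.cos (π - 2*x) = - Real.cos (2*x) := Real.cos_pi_sub _
    rw [hps, hcos] at hc
    have he : 2 * (π - 2*x) / π = 2 - 4 * x / π := by field_simp; ring
    linarith

/-- `overlapRate α ≤ 0` for all `α ∈ (0,1)`, with equality iff `α = 1/2`. -/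
theorem overlapRate_nonpos (α : ℝ) (hα : α ∈ Set.Ioo (0 : ℝ) 1) :
    overlapRate α ≤ 0 ∧ (overlapRate α = 0 ↔ α = 1 / 2) := by
  obtain ⟨ha0, ha1⟩ := hα
  have hb0 : 0 < 1 - α := by linarith
  have hπ : (0:ℝ) < π := Real.pi_pos
  set t : ℝ := Real.sqrt (α / (1 - α)) with ht
  have ht0 : 0 < t := Real.sqrt_pos.mpr (by positivity)
  set x : ℝ := Real.arctan t with hx
  have hx0 : 0 < x := by rw [hx, ← Real.arctan_zero]; exact Real.arctan_strictMono ht0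
  have hxlt : x < π / 2 := Real.arctan_lt_pi_div_two t
  have hsqrt_inv : Real.sqrt ((1 - α) / α) = t⁻¹ := by
    rw [ht, ← Real.sqrt_inv, inv_div]
  have hy : Real.arctan (Real.sqrt ((1 - α) / α)) = π / 2 - x := by
    rw [hsqrt_inv, Real.arctan_inv_of_pos ht0]
  -- sin x ^ 2 = α
  have hsin : Real.sin x ^ 2 = α := by
    rw [hx, Real.sin_arctan]
    have ht2 : t ^ 2 = α / (1 - α) := Real.sq_sqrt (by positivity)
    rw [div_pow, ht2, Real.sq_sqrt (by positivity : (0:ℝ) ≤ 1 + α / (1 - α))]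
    have h1 : 1 + α / (1 - α) = 1 / (1 - α) := by field_simp; ring
    rw [h1]
    field_simp
  set p : ℝ := x / α with hp
  set q : ℝ := (π / 2 - x) / (1 - α) with hq
  have hp0 : 0 < p := by positivity
  have hq0 : 0 < q := by rw [hq]; apply div_pos (by linarith) hb0
  have hcomb : α * p + (1 - α) * q = π / 2 := by
    rw [hp, hq]; field_simp; ring
  have hrate : overlapRate α = α * Real.log p + (1 - α) * Real.log q + Real.log (2 / π) := by
    rw [overlapRate, hy, ← ht, ← hx, hp, hq,
      Real.log_div hx0.ne' ha0.ne',
      Real.log_div (by linarith : (0:ℝ) < π/2 - x).ne' hb0.ne']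
  have hlog2π : Real.log (π / 2) + Real.log (2 / π) = 0 := by
    rw [← Real.log_mul (by positivity) (by positivity)]
    have : π / 2 * (2 / π) = 1 := by field_simp
    rw [this, Real.log_one]
  -- case p = q
  by_cases hpq : p = q
  · have hpval : p = π / 2 := by
      have h1 : α * p + (1 - α) * p = π / 2 := by
        nth_rewrite 2 [hpq]; exact hcomb
      linear_combination h1
    have hx_eq : x = π / 2 * α := by
      rw [hp] at hpval
      field_simp at hpval
      linarith
    have hxfix : x = π / 2 * Real.sin x ^ 2 := by rw [hsin]; exact hx_eq
    have hx4 : x = π / 4 := fixed_point hx0 hxlt hxfix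
    have hαhalf : α = 1 / 2 := by
      rw [← hsin, hx4, Real.sin_pi_div_four]
      rw [div_pow, Real.sq_sqrt (by norm_num : (2:ℝ) ≥ 0 )]
      norm_num
    have hzero : overlapRate α = 0 := by
      rw [hrate, ← hpq, ← add_mul]
      have : (α + (1 - α)) = 1 := by ring
      rw [this, one_mul, hpval]
      exact hlog2π
    exact ⟨le_of_eq hzero, by rw [hzero]; simp [hαhalf]⟩
  · -- strict inequality
    have hlt : α * Real.log p + (1 - α) * Real.log q < Real.log (π / 2) := by
      have := strictConcaveOn_log_Ioi.2 (Set.mem_Ioi.mpr hp0) (Set.mem_Ioi.mpr hq0)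
        hpq ha0 hb0 (by ring : α + (1 - α) = 1)
      simp only [smul_eq_mul] at this
      rwa [hcomb] at this
    have hneg : overlapRate α < 0 := by rw [hrate]; linarith
    refine ⟨le_of_lt hneg, ⟨fun h => absurd h (ne_of_lt hneg), fun h => ?_⟩⟩
    exfalso
    apply hpq
    rw [hp, hq, h]
    have : x = π / 4 := by
      subst h
      -- t = 1
      have ht1 : t = 1 := by rw [ht]; norm_num
      rw [hx, ht1, Real.arctan_one]
    rw [this]
    ring
end
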